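/- Let {g_k} be a sequence in the group N of n×n real upper triangular unipotent matrices, g_k = (u_{ij}(k)), satisfying the dichotomy condition: for each pair (i,j) with 1 ≤ i < j ≤ n, either u_{ij}(k) = 0 for every k, or |u_{ij}(k)| → ∞ as k → ∞. Let a be a diagonal matrix in SL(n,ℝ) with positive diagonal entries. If the sequence {g_k · a · g_k⁻¹} is bounded in SL(n,ℝ), then g_k commutes with a for every k. -/

import Mathlib

open Filter Topology

attribute [local instance] Matrix.frobeniusNormedAddCommGroup

/-- `u` is an upper triangular unipotent matrix. -/
def IsUpperUnip {n : ℕ} (u : Matrix (Fin n) (Fin n) ℝ) : Prop :=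
  (∀ i : Fin n, u i i = 1) ∧ ∀ i j : Fin n, j < i → u i j = 0

lemma abs_entry_le_frobenius {n : ℕ} (A : Matrix (Fin n) (Fin n) ℝ) (i j : Fin n) :
    |A i j| ≤ ‖A‖ := by
  rw [← Real.norm_eq_abs, ← coe_nnnorm, ← coe_nnnorm A, NNReal.coe_le_coe,
    Matrix.frobenius_nnnorm_def]
  have h1 : ‖A i j‖₊ = (‖A i j‖₊ ^ (2:ℝ)) ^ (1/2 : ℝ) := by
    rw [← NNReal.rpow_mul]; norm_num
  rw [h1]
  refine NNReal.rpow_le_rpow ?_ (by norm_num)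
  calc ‖A i j‖₊ ^ (2:ℝ) ≤ ∑ j', ‖A i j'‖₊ ^ (2:ℝ) :=
        Finset.single_le_sum (f := fun j' => ‖A i j'‖₊ ^ (2:ℝ))
          (fun _ _ => zero_le) (Finset.mem_univ j)
    _ ≤ ∑ i', ∑ j', ‖A i' j'‖₊ ^ (2:ℝ) :=
        Finset.single_le_sum (f := fun i' => ∑ j', ‖A i' j'‖₊ ^ (2:ℝ))
          (fun _ _ => zero_le) (Finset.mem_univ i)

/-- **Lemma (al52).** Let `{g_k}` be a sequence of upper triangular unipotent matrices
satisfying the dichotomy condition, and let `a` be a diagonal matrix in `SL(n,ℝ)` with positive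
diagonal entries.  If `{g_k a g_k⁻¹}` is bounded (in the Frobenius norm), then `g_k` commutes
with `a` for every `k`. -/
theorem stmt_10 {n : ℕ} (g : ℕ → Matrix (Fin n) (Fin n) ℝ)
    (hg : ∀ k, IsUpperUnip (g k))
    (hdich : ∀ i j : Fin n, i < j →
      (∀ k, g k i j = 0) ∨ Tendsto (fun k => |g k i j|) atTop atTop)
    (a : Matrix (Fin n) (Fin n) ℝ)
    (hadiag : ∀ i j : Fin n, i ≠ j → a i j = 0)
    (hapos : ∀ i : Fin n, 0 < a i i)
    (hadet : a.det = 1)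
    (hbdd : Bornology.IsBounded (Set.range fun k => g k * a * (g k)⁻¹)) :
    ∀ k, g k * a = a * g k := by
  -- basic facts about g k
  have hBT : ∀ k, (g k).BlockTriangular id := fun k i j h => (hg k).2 i j h
  have hdet : ∀ k, (g k).det = 1 := by
    intro k
    rw [Matrix.det_of_upperTriangular (hBT k)]
    simp [(hg k).1]
  have hunit : ∀ k, IsUnit (g k).det := fun k => by rw [hdet k]; exact isUnit_one
  have hinvBT : ∀ k, ((g k)⁻¹).BlockTriangular id := by
    intro k
    haveI := (g k).invertibleOfIsUnitDet (hunit k)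
    exact Matrix.blockTriangular_inv_of_blockTriangular (hBT k)
  have hmulinv : ∀ k, g k * (g k)⁻¹ = 1 := fun k => Matrix.mul_nonsing_inv _ (hunit k)
  have hinvdiag : ∀ k, ∀ j : Fin n, (g k)⁻¹ j j = 1 := by
    intro k j
    have h1 : (g k * (g k)⁻¹) j j = 1 := by rw [hmulinv k]; simp
    rw [Matrix.mul_apply] at h1
    rw [Finset.sum_eq_single j] at h1
    · rw [(hg k).1 j, one_mul] at h1; exact h1
    · intro l _ hlj
      rcases lt_or_gt_of_ne hlj with h | h
      · rw [(hg k).2 j l h, zero_mul]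
      · rw [hinvBT k h, mul_zero]
    · exact fun h => absurd (Finset.mem_univ j) h
  -- the uniform bound
  obtain ⟨C, hC⟩ := hbdd.exists_norm_le
  have hCentry : ∀ k (i j : Fin n), |(g k * a * (g k)⁻¹) i j| ≤ C := by
    intro k i j
    exact le_trans (abs_entry_le_frobenius _ i j) (hC _ ⟨k, rfl⟩)
  -- key induction
  have key : ∀ m : ℕ, ∀ i j : Fin n, i < j → (j : ℕ) - (i : ℕ) ≤ m →
      ∀ k, g k i j * (a j j - a i i) = 0 := by
    intro m
    induction m with
    | zero =>
      intro i j hij hle k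
      have : (i : ℕ) < j := hij
      omega
    | succ m ih =>
      intro i j hij hle k
      have hentry : ∀ k', (g k' * a * (g k')⁻¹) i j = g k' i j * (a j j - a i i) := by
        intro k'
        have hga : ∀ l, (g k' * a) i l = g k' i l * a l l := by
          intro l
          rw [Matrix.mul_apply, Finset.sum_eq_single l]
          · intro b _ hbl; rw [hadiag b l hbl, mul_zero]
          · exact fun h => absurd (Finset.mem_univ l) h
        have h1 : (g k' * a * (g k')⁻¹) i j = ∑ l, g k' i l * a l l * (g k')⁻¹ l j := by
          rw [Matrix.mul_apply]
          exact Finset.sum_congr rfl fun l _ => by rw [hga l]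
        have h2 : ∑ l, g k' i l * a i i * (g k')⁻¹ l j = 0 := by
          have : (g k' * (g k')⁻¹) i j = 0 := by
            rw [hmulinv k']
            exact Matrix.one_apply_ne (Fin.ne_of_lt hij)
          rw [Matrix.mul_apply] at this
          calc ∑ l, g k' i l * a i i * (g k')⁻¹ l j
              = a i i * ∑ l, g k' i l * (g k')⁻¹ l j := by
                rw [Finset.mul_sum]; exact Finset.sum_congr rfl fun l _ => by ring
            _ = 0 := by rw [this, mul_zero]
        have h3 : (g k' * a * (g k')⁻¹) i j
            = ∑ l, g k' i l * (a l l - a i i) * (g k')⁻¹ l j := by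
          rw [h1, ← sub_zero (∑ l, g k' i l * a l l * (g k')⁻¹ l j), ← h2,
            ← Finset.sum_sub_distrib]
          exact Finset.sum_congr rfl fun l _ => by ring
        rw [h3, Finset.sum_eq_single j]
        · rw [hinvdiag k' j, mul_one]
        · intro l _ hlj
          rcases lt_or_gt_of_ne hlj with h | h
          · -- l < j
            rcases lt_trichotomy l i with h2 | h2 | h2
            · rw [(hg k').2 i l h2, zero_mul, zero_mul]
            · subst h2; simp
            · have := ih i l h2 (by
                have h1 : (i : ℕ) < l := h2
                have h4 : (l : ℕ) < j := h
                omega) k'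
              rw [this, zero_mul]
          · rw [hinvBT k' h, mul_zero]
        · exact fun h => absurd (Finset.mem_univ j) h
      rcases hdich i j hij with h0 | htend
      · rw [h0 k, zero_mul]
      · have haa : a j j = a i i := by
          by_contra hne
          have hpos : 0 < |a j j - a i i| := abs_pos.2 (sub_ne_zero.2 hne)
          have htend2 : Tendsto (fun k' => |g k' i j| * |a j j - a i i|) atTop atTop :=
            htend.atTop_mul_const hpos
          obtain ⟨k', hk'⟩ := (htend2.eventually_ge_atTop (C + 1)).exists
          have hle2 : |g k' i j| * |a j j - a i i| ≤ C := by
            rw [← abs_mul, ← hentry k']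
            exact hCentry k' i j
          have hC0 : 0 ≤ C := le_trans (abs_nonneg _) (hCentry 0 i j)
          linarith
        rw [haa, sub_self, mul_zero]
  -- conclude
  intro k
  ext i j
  rw [Matrix.mul_apply, Matrix.mul_apply]
  have hga : (∑ l, g k i l * a l j) = g k i j * a j j := by
    rw [Finset.sum_eq_single j]
    · intro b _ hbj; rw [hadiag b j hbj, mul_zero]
    · exact fun h => absurd (Finset.mem_univ j) h
  have hag : (∑ l, a i l * g k l j) = a i i * g k i j := by
    rw [Finset.sum_eq_single i]
    · intro b _ hbi; rw [hadiag i b (Ne.symm hbi), zero_mul]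
    · exact fun h => absurd (Finset.mem_univ i) h
  rw [hga, hag]
  rcases lt_trichotomy i j with h | h | h
  · have := key n i j h (by omega) k
    nlinarith [this]
  · subst h; ring
  · rw [(hg k).2 i j h, zero_mul, mul_zero]
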